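/- Let u be an infinite word over a finite alphabet whose language is closed under reversal. Then u is rich in palindromes if and only if P(n+1) + P(n) = C(n+1) − C(n) + 2 for all n ∈ ℕ. -/

import Mathlib

open List

/-- The factor of `u` of length `n` starting at position `i`. -/
def word {A : Type*} (u : ℕ → A) (i n : ℕ) : List A :=
  (List.range n).map (fun j => u (i + j))

/-- `w` occurs in `u` at position `i`. -/
def OccursAt {A : Type*} (u : ℕ → A) (w : List A) (i : ℕ) : Prop :=
  w = word u i w.length

/-- `w` is a factor of the infinite word `u`. -/
def IsFactor {A : Type*} (u : ℕ → A) (w : List A) : Prop :=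
  ∃ i, OccursAt u w i

/-- Every letter of the alphabet occurs in `u`. -/
def AllLettersOccur {A : Type*} (u : ℕ → A) : Prop :=
  ∀ a : A, ∃ i, u i = a

/-- The language of `u` is closed under reversal. -/
def ClosedUnderReversal {A : Type*} (u : ℕ → A) : Prop :=
  ∀ w : List A, IsFactor u w → IsFactor u w.reverse

/-- `u` is uniformly recurrent: every factor occurs in every window of some
bounded length. -/
def UniformlyRecurrent {A : Type*} (u : ℕ → A) : Prop :=
  ∀ w : List A, IsFactor u w → ∃ N : ℕ, ∀ i : ℕ, ∃ j : ℕ,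
    i ≤ j ∧ j < i + N ∧ OccursAt u w j

/-- Factor complexity: the number of factors of `u` of length `n`. -/
noncomputable def complexity {A : Type*} (u : ℕ → A) (n : ℕ) : ℕ :=
  Set.ncard {w : List A | w.length = n ∧ IsFactor u w}

/-- Palindromic complexity: the number of palindromic factors of `u` of
length `n`. -/
noncomputable def palComplexity {A : Type*} (u : ℕ → A) (n : ℕ) : ℕ :=
  Set.ncard {w : List A | w.length = n ∧ IsFactor u w ∧ w.reverse = w}

/-- The number of distinct palindromic factors of a finite word
(the empty word included). -/
noncomputable def palCount {A : Type*} (w : List A) : ℕ :=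
  Set.ncard {v : List A | v <:+: w ∧ v.reverse = v}

/-- `u` is rich in palindromes. -/
def Rich {A : Type*} (u : ℕ → A) : Prop :=
  ∀ w : List A, IsFactor u w → palCount w = w.length + 1

/-- `j < k` are two successive occurrences of `w` in `u`. -/
def SuccOccurrences {A : Type*} (u : ℕ → A) (w : List A) (j k : ℕ) : Prop :=
  OccursAt u w j ∧ OccursAt u w k ∧ j < k ∧
    ∀ l : ℕ, j < l → l < k → ¬ OccursAt u w l

/-- The set of return words of the factor `w` in `u`. -/
def returnWords {A : Type*} (u : ℕ → A) (w : List A) : Set (List A) :=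
  {v | ∃ j k : ℕ, SuccOccurrences u w j k ∧ v = word u j (k - j)}

/-- Left extensions of `w` in `u`. -/
def Lext {A : Type*} (u : ℕ → A) (w : List A) : Set A :=
  {a | IsFactor u (a :: w)}

/-- Right extensions of `w` in `u`. -/
def Rext {A : Type*} (u : ℕ → A) (w : List A) : Set A :=
  {b | IsFactor u (w ++ [b])}

/-- Bilateral extensions of `w` in `u`. -/
def Bext {A : Type*} (u : ℕ → A) (w : List A) : Set (A × A) :=
  {p | IsFactor u (p.1 :: (w ++ [p.2]))}

/-- Palindromic extensions of a (palindromic) factor `w` of `u`. -/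
def Pext {A : Type*} (u : ℕ → A) (w : List A) : Set (List A) :=
  {v | ∃ a : A, v = a :: (w ++ [a]) ∧ IsFactor u v}

/-- `w` is a bispecial factor of `u`. -/
def Bispecial {A : Type*} (u : ℕ → A) (w : List A) : Prop :=
  IsFactor u w ∧ 2 ≤ Set.ncard (Lext u w) ∧ 2 ≤ Set.ncard (Rext u w)

/-- The bilateral order of a factor `w` of `u`. -/
noncomputable def bilateralOrder {A : Type*} (u : ℕ → A) (w : List A) : ℤ :=
  (Set.ncard (Bext u w) : ℤ) - Set.ncard (Rext u w) - Set.ncard (Lext u w) + 1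

/-- `u` is eventually periodic. -/
def EventuallyPeriodic {A : Type*} (u : ℕ → A) : Prop :=
  ∃ p : ℕ, 0 < p ∧ ∃ N : ℕ, ∀ n : ℕ, N ≤ n → u (n + p) = u n

/-- `u` is aperiodic. -/
def Aperiodic {A : Type*} (u : ℕ → A) : Prop :=
  ¬ EventuallyPeriodic u

/-- `u` is (1-)balanced. -/
def IsBalanced {A : Type*} [DecidableEq A] (u : ℕ → A) : Prop :=
  ∀ a : A, ∀ w v : List A, IsFactor u w → IsFactor u v → w.length = v.length →
    |(w.count a : ℤ) - (v.count a : ℤ)| ≤ 1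

namespace Stmt5Aux

variable {A : Type*}

/-! ### Basic `word` lemmas -/

@[simp] lemma word_length (u : ℕ → A) (i n : ℕ) : (word u i n).length = n := by
  simp [word]

lemma word_ext {u : ℕ → A} {l : List A} {i n : ℕ} (hlen : l.length = n)
    (h : ∀ j (hj : j < l.length), l[j] = u (i + j)) : l = word u i n := by
  apply List.ext_getElem (by simp [hlen])
  intro j h1 h2
  simp only [word, getElem_map, getElem_range]
  exact h j h1

lemma word_eq_imp {u : ℕ → A} {a b n : ℕ} (h : word u a n = word u b n) {j : ℕ} (hj : j < n) :
    u (a + j) = u (b + j) := by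
  have h1 : (word u a n)[j]'(by simpa using hj) = (word u b n)[j]'(by simpa using hj) := by
    simp only [h]
  simpa [word] using h1

lemma word_take (u : ℕ → A) (i n m : ℕ) (h : m ≤ n) : (word u i n).take m = word u i m := by
  apply word_ext (by simp; omega)
  intro j hj
  simp only [List.getElem_take, word, getElem_map, getElem_range]

lemma word_drop (u : ℕ → A) (i n m : ℕ) : (word u i n).drop m = word u (i + m) (n - m) := by
  apply word_ext (by simp)
  intro j hj
  simp only [List.getElem_drop, word, getElem_map, getElem_range]
  congr 1; omega

lemma word_dropLast (u : ℕ → A) (i n : ℕ) : (word u i (n + 1)).dropLast = word u i n := by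
  rw [dropLast_eq_take, word_length]
  exact word_take u i (n + 1) n (by omega)

lemma word_tail (u : ℕ → A) (i n : ℕ) : (word u i (n + 1)).tail = word u (i + 1) n := by
  rw [← List.drop_one, word_drop]
  norm_num

lemma word_isFactor (u : ℕ → A) (i n : ℕ) : IsFactor u (word u i n) :=
  ⟨i, by simp [OccursAt]⟩

lemma isFactor_iff_word {u : ℕ → A} {w : List A} : IsFactor u w ↔ ∃ i, w = word u i w.length :=
  Iff.rfl

lemma prefix_word {u : ℕ → A} {v : List A} {i n : ℕ} (h : v <+: word u i n) :
    v = word u i v.length ∧ v.length ≤ n := by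
  have hl : v.length ≤ n := by simpa using h.length_le
  refine ⟨?_, hl⟩
  rw [prefix_iff_eq_take] at h
  rwa [word_take u i n v.length hl] at h

lemma suffix_word {u : ℕ → A} {v : List A} {i n : ℕ} (h : v <:+ word u i n) :
    v = word u (i + (n - v.length)) v.length ∧ v.length ≤ n := by
  have hl : v.length ≤ n := by simpa using h.length_le
  rw [suffix_iff_eq_drop] at h
  simp only [word_length] at h
  rw [word_drop] at h
  refine ⟨?_, hl⟩
  convert h using 2
  omega

lemma word_prefix_word (u : ℕ → A) (i : ℕ) {m n : ℕ} (h : m ≤ n) :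
    word u i m <+: word u i n := by
  rw [prefix_iff_eq_take]
  simp only [word_length]
  exact (word_take u i n m h).symm

lemma word_suffix_word (u : ℕ → A) {i n j m : ℕ} (hij : i ≤ j) (hend : j + m = i + n) :
    word u j m <:+ word u i n := by
  rw [suffix_iff_eq_drop]
  simp only [word_length]
  rw [word_drop]
  congr 1 <;> omega

lemma word_infix_word (u : ℕ → A) {i n j m : ℕ} (hij : i ≤ j) (hend : j + m ≤ i + n) :
    word u j m <:+: word u i n := by
  apply List.infix_iff_prefix_suffix.mpr
  exact ⟨word u j (i + n - j), word_prefix_word u j (by omega),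
    word_suffix_word u hij (by omega)⟩

lemma infix_word {u : ℕ → A} {v : List A} {i n : ℕ} (h : v <:+: word u i n) :
    ∃ o, o + v.length ≤ n ∧ v = word u (i + o) v.length := by
  obtain ⟨t, hvt, hts⟩ := List.infix_iff_prefix_suffix.mp h
  obtain ⟨ht, htl⟩ := suffix_word hts
  rw [ht] at hvt
  obtain ⟨hv, hvl⟩ := prefix_word hvt
  exact ⟨n - t.length, by omega, hv⟩

lemma isFactor_of_infix {u : ℕ → A} {w v : List A} (hv : v <:+: w) (hw : IsFactor u w) :
    IsFactor u v := by
  obtain ⟨i, hi⟩ := hw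
  rw [hi] at hv
  obtain ⟨o, _, hv'⟩ := infix_word hv
  exact ⟨i + o, hv'⟩

lemma reverse_occ_transfer {u : ℕ → A} {m i L : ℕ}
    (h : word u m L = (word u i L).reverse) {o k : ℕ} (hok : o + k ≤ L) :
    word u (m + o) k = (word u (i + (L - o - k)) k).reverse := by
  have hp : ∀ j, j < L → u (m + j) = u (i + (L - 1 - j)) := by
    intro j hj
    have h1 : (word u m L)[j]'(by simpa using hj) =
        ((word u i L).reverse)[j]'(by simpa using hj) := by
      simp only [h]
    rw [List.getElem_reverse] at h1
    simp only [word_length] at h1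
    simpa [word] using h1
  symm
  apply word_ext (by simp)
  intro j hjl
  have hjk : j < k := by simpa using hjl
  rw [List.getElem_reverse]
  simp only [word_length, word, getElem_map, getElem_range, length_map, length_range]
  have h2 := hp (o + j) (by omega)
  have e1 : i + (L - o - k) + (k - 1 - j) = i + (L - 1 - (o + j)) := by omega
  have e2 : m + o + j = m + (o + j) := by omega
  rw [e1, e2]
  exact h2.symm

lemma pal_occ_transfer {u : ℕ → A} {p L : ℕ} (h : (word u p L).reverse = word u p L)
    {o k : ℕ} (hok : o + k ≤ L) :
    word u (p + o) k = (word u (p + (L - o - k)) k).reverse :=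
  reverse_occ_transfer h.symm hok



/-! ### Palindromic infixes, longest palindromic suffix -/

def PalSet (w : List A) : Set (List A) := {v : List A | v <:+: w ∧ v.reverse = v}

lemma palCount_eq_ncard (w : List A) : palCount w = (PalSet w).ncard := rfl

lemma infixSet_finite (w : List A) : {v : List A | v <:+: w}.Finite := by
  classical
  refine Set.Finite.subset w.sublists.toFinset.finite_toSet ?_
  intro v hv
  simp only [List.coe_toFinset, Set.mem_setOf_eq, List.mem_sublists]
  exact hv.sublist

lemma palSet_finite (w : List A) : (PalSet w).Finite :=
  (infixSet_finite w).subset (fun _ h => h.1)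

noncomputable def lpsIdx (x : List A) : ℕ :=
  sInf {j | (x.drop j).reverse = x.drop j ∧ x.drop j ≠ []}

noncomputable def lps (x : List A) : List A := x.drop (lpsIdx x)

lemma lps_set_nonempty (x : List A) (hx : x ≠ []) :
    {j | (x.drop j).reverse = x.drop j ∧ x.drop j ≠ []}.Nonempty := by
  have hxl : 1 ≤ x.length := List.length_pos_iff.mpr hx
  refine ⟨x.length - 1, ?_, ?_⟩
  · have hl : (x.drop (x.length - 1)).length = 1 := by
      simp only [List.length_drop]; omega
    obtain ⟨a, ha⟩ := List.length_eq_one_iff.mp hl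
    rw [ha]; rfl
  · intro hcon
    have : (x.drop (x.length - 1)).length = 1 := by
      simp only [List.length_drop]; omega
    rw [hcon] at this
    simp at this

lemma lps_spec {x : List A} (hx : x ≠ []) : (lps x).reverse = lps x ∧ lps x ≠ [] :=
  Nat.sInf_mem (lps_set_nonempty x hx)

lemma lps_suffix (x : List A) : lps x <:+ x := List.drop_suffix _ _

lemma lps_length {x : List A} : (lps x).length = x.length - lpsIdx x := by
  simp [lps, List.length_drop]

lemma lps_max {x v : List A} (hx : x ≠ []) (hv : v <:+ x) (hpal : v.reverse = v)
    (hne : v ≠ []) : v.length ≤ (lps x).length := by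
  have hle : v.length ≤ x.length := hv.length_le
  have hv' := hv
  rw [suffix_iff_eq_drop] at hv'
  have hmem : x.length - v.length ∈
      {j | (x.drop j).reverse = x.drop j ∧ x.drop j ≠ []} := by
    constructor
    · rw [← hv']; exact hpal
    · rw [← hv']; exact hne
  have h1 : lpsIdx x ≤ x.length - v.length := Nat.sInf_le hmem
  have h2 := lps_length (x := x)
  omega

lemma suffix_of_suffix_le {v s x : List A} (hv : v <:+ x) (hs : s <:+ x)
    (h : v.length ≤ s.length) : v <:+ s := by
  obtain ⟨a, ha⟩ := hv
  obtain ⟨b, hb⟩ := hs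
  have hab : b <+: a := by
    apply List.prefix_of_prefix_length_le ⟨s, hb⟩ ⟨v, ha⟩
    have h1 := congrArg List.length ha
    have h2 := congrArg List.length hb
    simp only [List.length_append] at h1 h2
    omega
  obtain ⟨c, hc⟩ := hab
  refine ⟨c, ?_⟩
  apply List.append_cancel_left (as := b)
  rw [← List.append_assoc, hc, ha, hb]

lemma nil_mem_palSet (x : List A) : [] ∈ PalSet x := ⟨List.nil_infix, rfl⟩

lemma palSet_dropLast_subset (x : List A) : PalSet x.dropLast ⊆ PalSet x :=
  fun _ hv => ⟨hv.1.trans (x.dropLast_prefix.isInfix), hv.2⟩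

lemma palSet_eq_insert {x : List A} (hx : x ≠ []) :
    PalSet x = insert (lps x) (PalSet x.dropLast) := by
  ext v
  simp only [Set.mem_insert_iff]
  constructor
  · rintro ⟨hinf, hpal⟩
    by_cases hv0 : v = []
    · right; rw [hv0]; exact nil_mem_palSet _
    obtain ⟨s, t, hst⟩ := hinf
    by_cases ht : t = []
    · have hsuf : v <:+ x := by
        rw [← hst, ht, List.append_nil]
        exact (List.suffix_append s v)
      have hlen := lps_max hx hsuf hpal hv0
      have hvs : v <:+ lps x := suffix_of_suffix_le hsuf (lps_suffix x) hlen
      by_cases hveq : v = lps x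
      · left; exact hveq
      · right
        have hpre : v <+: lps x := by
          apply List.reverse_suffix.mp
          rw [hpal, (lps_spec hx).1]
          exact hvs
        have hlt : v.length < (lps x).length := by
          rcases lt_or_eq_of_le hpre.length_le with h | h
          · exact h
          · exact absurd (hpre.eq_of_length h) hveq
        have hpre' : v <+: (lps x).dropLast := by
          have heq : ((lps x).dropLast).take v.length = (lps x).take v.length := by
            rw [dropLast_eq_take, List.take_take]
            congr 1
            omega
          rw [prefix_iff_eq_take, heq, ← prefix_iff_eq_take]
          exact hpre
        refine ⟨hpre'.isInfix.trans ?_, hpal⟩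
        obtain ⟨t', ht'⟩ := lps_suffix x
        have hdx : x.dropLast = t' ++ (lps x).dropLast := by
          conv_lhs => rw [← ht']
          rw [List.dropLast_append_of_ne_nil (lps_spec hx).2]
        rw [hdx]
        exact (List.suffix_append t' (lps x).dropLast).isInfix
    · right
      refine ⟨?_, hpal⟩
      have hdl : x.dropLast = s ++ v ++ t.dropLast := by
        rw [← hst, List.dropLast_append_of_ne_nil ht]
      exact ⟨s, t.dropLast, hdl.symm⟩
  · rintro (rfl | hv)
    · exact ⟨(lps_suffix x).isInfix, (lps_spec hx).1⟩
    · exact palSet_dropLast_subset x hv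

lemma palCount_nil : palCount ([] : List A) = 1 := by
  have h : PalSet ([] : List A) = {[]} := by
    ext v
    simp only [PalSet, Set.mem_setOf_eq, Set.mem_singleton_iff]
    constructor
    · rintro ⟨h1, _⟩
      exact List.sublist_nil.mp h1.sublist
    · rintro rfl
      exact ⟨List.infix_rfl, rfl⟩
  rw [palCount_eq_ncard, h, Set.ncard_singleton]

lemma palCount_dropLast_le (x : List A) : palCount x.dropLast ≤ palCount x :=
  Set.ncard_le_ncard (palSet_dropLast_subset x) (palSet_finite x)

open Classical in
lemma palCount_succ {x : List A} (hx : x ≠ []) :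
    palCount x = palCount x.dropLast + (if lps x ∈ PalSet x.dropLast then 0 else 1) := by
  rw [palCount_eq_ncard, palCount_eq_ncard, palSet_eq_insert hx]
  split
  · rw [Set.insert_eq_self.mpr ‹_›]; omega
  · rw [Set.ncard_insert_of_notMem ‹_› (palSet_finite _)]

lemma palCount_le_length (x : List A) : palCount x ≤ x.length + 1 := by
  induction x using List.reverseRecOn with
  | nil => simp [palCount_nil]
  | append_singleton y a ih =>
    have h1 := palCount_succ (x := y ++ [a]) (by simp)
    rw [List.dropLast_concat] at h1
    simp only [List.length_append, List.length_singleton]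
    by_cases hmem : lps (y ++ [a]) ∈ PalSet y
    · rw [if_pos hmem] at h1; omega
    · rw [if_neg hmem] at h1; omega

def richL (x : List A) : Prop := palCount x = x.length + 1

lemma richL_dropLast {x : List A} (h : richL x) : richL x.dropLast := by
  by_cases hx : x = []
  · rw [hx]; simpa [hx] using h
  · have h1 := palCount_succ hx
    have h3 := palCount_le_length x.dropLast
    have hlen : x.dropLast.length = x.length - 1 := by simp
    have hxl : 1 ≤ x.length := List.length_pos_iff.mpr hx
    unfold richL at *
    by_cases hmem : lps x ∈ PalSet x.dropLast
    · rw [if_pos hmem] at h1; omega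
    · rw [if_neg hmem] at h1; omega

lemma lps_not_mem_of_richL {x : List A} (h : richL x) (hx : x ≠ []) :
    lps x ∉ PalSet x.dropLast := by
  intro hmem
  have h1 := palCount_succ hx
  rw [if_pos hmem] at h1
  have h3 := palCount_le_length x.dropLast
  have hlen : x.dropLast.length = x.length - 1 := by simp
  have hxl : 1 ≤ x.length := List.length_pos_iff.mpr hx
  unfold richL at h
  omega

lemma lps_mem_of_not_richL {x : List A} (hx : x ≠ []) (hd : richL x.dropLast)
    (h : ¬ richL x) : lps x ∈ PalSet x.dropLast := by
  by_contra hmem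
  have h1 := palCount_succ hx
  rw [if_neg hmem] at h1
  unfold richL at *
  have hlen : x.dropLast.length = x.length - 1 := by simp
  have hxl : 1 ≤ x.length := List.length_pos_iff.mpr hx
  omega



/-! ### Finsets of factors, reversal classes, counting -/

section Factors
variable [Fintype A] [DecidableEq A] (u : ℕ → A)

lemma finite_length_eq (n : ℕ) : {w : List A | w.length = n}.Finite := by
  induction n with
  | zero =>
    apply Set.Finite.subset (Set.finite_singleton ([] : List A))
    intro w hw
    simp only [Set.mem_setOf_eq, List.length_eq_zero_iff] at hw
    simp [hw]
  | succ n ih =>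
    apply Set.Finite.subset (Set.Finite.image2 (· :: ·) Set.finite_univ ih)
    rintro (_ | ⟨a, t⟩) hw
    · simp at hw
    · exact Set.mem_image2_of_mem (Set.mem_univ a) (by simpa using hw)

lemma factorSet_finite (n : ℕ) : {w : List A | w.length = n ∧ IsFactor u w}.Finite :=
  (finite_length_eq n).subset fun _ h => h.1

noncomputable def FF (n : ℕ) : Finset (List A) := (factorSet_finite u n).toFinset

lemma mem_FF {w : List A} {n : ℕ} : w ∈ FF u n ↔ w.length = n ∧ IsFactor u w := by
  simp [FF]

lemma word_mem_FF (i n : ℕ) : word u i n ∈ FF u n :=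
  (mem_FF u).mpr ⟨word_length u i n, word_isFactor u i n⟩

lemma complexity_eq_card (n : ℕ) : complexity u n = (FF u n).card :=
  Set.ncard_eq_toFinset_card _ _

noncomputable def PFF (n : ℕ) : Finset (List A) := (FF u n).filter (fun w => w.reverse = w)

lemma palComplexity_eq_card (n : ℕ) : palComplexity u n = (PFF u n).card := by
  have hset : {w : List A | w.length = n ∧ IsFactor u w ∧ w.reverse = w} = ↑(PFF u n) := by
    ext w
    simp only [PFF, Finset.coe_filter, Set.mem_setOf_eq, mem_FF]
    tauto
  rw [palComplexity, hset, Set.ncard_coe_finset]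

/-! ### Reversal classes -/

def cls (w : List A) : Finset (List A) := {w, w.reverse}

lemma mem_cls_self (w : List A) : w ∈ cls w := by simp [cls]

lemma reverse_mem_cls (w : List A) : w.reverse ∈ cls w := by simp [cls]

lemma mem_cls_iff {v w : List A} : v ∈ cls w ↔ v = w ∨ v = w.reverse := by simp [cls]

lemma cls_eq_of_mem {v w : List A} (h : v ∈ cls w) : cls v = cls w := by
  rcases mem_cls_iff.mp h with rfl | rfl
  · rfl
  · rw [cls, cls, List.reverse_reverse, Finset.pair_comm]

lemma cls_pal {w : List A} (h : w.reverse = w) : cls w = {w} := by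
  simp [cls, h]

lemma fiber_eq {s : Finset (List A)} (hs : ∀ w ∈ s, w.reverse ∈ s) {X : Finset (List A)}
    (hX : X ∈ s.image cls) : s.filter (fun a => cls a = X) = X := by
  obtain ⟨w, hw, rfl⟩ := Finset.mem_image.mp hX
  ext v
  simp only [Finset.mem_filter]
  constructor
  · rintro ⟨hv, hcls⟩
    rw [← hcls]
    exact mem_cls_self v
  · intro hv
    refine ⟨?_, cls_eq_of_mem hv⟩
    rcases mem_cls_iff.mp hv with rfl | rfl
    · exact hw
    · exact hs w hw

lemma cls_card (w : List A) : cls w = {w} ∨ (cls w).card = 2 := by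
  by_cases h : w.reverse = w
  · left; exact cls_pal h
  · right
    rw [cls, Finset.card_pair (fun hh => h hh.symm)]

lemma pal_card_eq (s : Finset (List A)) :
    ((s.image cls).filter (fun X => X.card = 1)).card
      = (s.filter (fun w => w.reverse = w)).card := by
  symm
  apply Finset.card_bij (fun w _ => cls w)
  · intro w hw
    simp only [Finset.mem_filter] at hw
    simp only [Finset.mem_filter, Finset.mem_image]
    exact ⟨⟨w, hw.1, rfl⟩, by rw [cls_pal hw.2]; simp⟩
  · intro w1 h1 w2 h2 heq
    simp only [Finset.mem_filter] at h1 h2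
    rw [cls_pal h1.2, cls_pal h2.2] at heq
    exact Finset.singleton_injective heq
  · intro X hX
    simp only [Finset.mem_filter, Finset.mem_image] at hX
    obtain ⟨⟨w, hw, rfl⟩, hcard⟩ := hX
    have hpal : w.reverse = w := by
      by_contra hc
      rw [cls, Finset.card_pair (fun hh => hc hh.symm)] at hcard
      omega
    exact ⟨w, Finset.mem_filter.mpr ⟨hw, hpal⟩, rfl⟩

lemma card_add_pal (s : Finset (List A)) (hs : ∀ w ∈ s, w.reverse ∈ s) :
    s.card + (s.filter (fun w => w.reverse = w)).card = 2 * (s.image cls).card := by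
  rw [Finset.card_eq_sum_card_image cls s, ← pal_card_eq s, Finset.card_filter,
    ← Finset.sum_add_distrib]
  have hpt : ∀ X ∈ s.image cls,
      ((s.filter (fun a => cls a = X)).card + (if X.card = 1 then 1 else 0)) = 2 := by
    intro X hX
    rw [fiber_eq hs hX]
    obtain ⟨w, hw, rfl⟩ := Finset.mem_image.mp hX
    rcases cls_card w with h | h
    · rw [h]; simp
    · rw [h]; simp
  rw [Finset.sum_congr rfl hpt, Finset.sum_const, smul_eq_mul, mul_comm]

lemma reverse_mem_FF (hcur : ClosedUnderReversal u) {w : List A} {n : ℕ}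
    (h : w ∈ FF u n) : w.reverse ∈ FF u n := by
  rw [mem_FF] at h ⊢
  exact ⟨by simp [h.1], hcur w h.2⟩

noncomputable def CL (n : ℕ) : Finset (Finset (List A)) := (FF u n).image cls

noncomputable def NPF (n : ℕ) : Finset (List A) := (FF u n).filter (fun w => ¬ w.reverse = w)

noncomputable def NPC (n : ℕ) : Finset (Finset (List A)) := (NPF u n).image cls

lemma count_CL (hcur : ClosedUnderReversal u) (n : ℕ) : (FF u n).card + (PFF u n).card = 2 * (CL u n).card :=
  card_add_pal _ (fun _ hw => reverse_mem_FF u hcur hw)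

lemma count_NPC (hcur : ClosedUnderReversal u) (n : ℕ) : (NPF u n).card = 2 * (NPC u n).card := by
  have h := card_add_pal (NPF u n) ?_
  · have hz : (NPF u n).filter (fun w => w.reverse = w) = ∅ := by
      ext w
      simp only [NPF, Finset.filter_filter, Finset.mem_filter, Finset.notMem_empty, iff_false]
      tauto
    rw [hz] at h
    simpa [NPC] using h
  · intro w hw
    simp only [NPF, Finset.mem_filter] at hw ⊢
    refine ⟨reverse_mem_FF u hcur hw.1, ?_⟩
    rw [List.reverse_reverse]
    exact fun hc => hw.2 hc.symm

lemma count_split (n : ℕ) : (PFF u n).card + (NPF u n).card = (FF u n).card :=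
  Finset.card_filter_add_card_filter_not _

/-! ### First-entry edges -/

noncomputable def tau (n : ℕ) (X : Finset (List A)) : ℕ := sInf {p | word u p n ∈ X}

noncomputable def te (n : ℕ) (X : Finset (List A)) : List A := word u (tau u n X - 1) (n + 1)

lemma cls_occ_nonempty {n : ℕ} {X : Finset (List A)} (hX : X ∈ CL u n) :
    {p | word u p n ∈ X}.Nonempty := by
  obtain ⟨w, hw, rfl⟩ := Finset.mem_image.mp hX
  obtain ⟨hlen, i, hocc⟩ := (mem_FF u).mp hw
  unfold OccursAt at hocc
  rw [hlen] at hocc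
  exact ⟨i, by simp only [Set.mem_setOf_eq]; rw [← hocc]; exact mem_cls_self w⟩

lemma tau_spec {n : ℕ} {X : Finset (List A)} (hX : X ∈ CL u n) :
    word u (tau u n X) n ∈ X :=
  Nat.sInf_mem (cls_occ_nonempty u hX)

lemma tau_min {n : ℕ} {X : Finset (List A)} {q : ℕ} (h : q < tau u n X) :
    word u q n ∉ X :=
  Nat.notMem_of_lt_sInf h

lemma tau_le {n : ℕ} {X : Finset (List A)} {p : ℕ} (h : word u p n ∈ X) :
    tau u n X ≤ p := Nat.sInf_le h

lemma cls_eq_of_mem_CL {n : ℕ} {X : Finset (List A)} (hX : X ∈ CL u n) {v : List A}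
    (hv : v ∈ X) : cls v = X := by
  obtain ⟨w, _, rfl⟩ := Finset.mem_image.mp hX
  exact cls_eq_of_mem hv

lemma reverse_mem_of_mem_CL {n : ℕ} {X : Finset (List A)} (hX : X ∈ CL u n) {v : List A}
    (hv : v ∈ X) : v.reverse ∈ X := by
  obtain ⟨w, _, rfl⟩ := Finset.mem_image.mp hX
  rcases mem_cls_iff.mp hv with h | h
  · rw [h]
    exact reverse_mem_cls w
  · rw [h, List.reverse_reverse]
    exact mem_cls_self w

lemma tau_eq_zero_iff {n : ℕ} {X : Finset (List A)} (hX : X ∈ CL u n) :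
    tau u n X = 0 ↔ X = cls (word u 0 n) := by
  constructor
  · intro h
    have hs := tau_spec u hX
    rw [h] at hs
    exact (cls_eq_of_mem_CL u hX hs).symm
  · rintro rfl
    exact Nat.le_zero.mp (tau_le u (mem_cls_self _))

lemma pal_word_succ {p n : ℕ} (hpal : (word u p (n + 1)).reverse = word u p (n + 1)) :
    word u p n = (word u (p + 1) n).reverse := by
  have h := pal_occ_transfer (u := u) hpal (o := 0) (k := n) (by omega)
  have e1 : p + 0 = p := rfl
  have e2 : p + (n + 1 - 0 - n) = p + 1 := by omega
  rwa [e1, e2] at h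

lemma te_not_pal {n : ℕ} {X : Finset (List A)} (hX : X ∈ CL u n) (h1 : 1 ≤ tau u n X) :
    ¬ (te u n X).reverse = te u n X := by
  intro hpal
  have hp := pal_word_succ u (p := tau u n X - 1) (n := n) hpal
  rw [Nat.sub_add_cancel h1] at hp
  have hmem : word u (tau u n X - 1) n ∈ X := by
    rw [hp]
    exact reverse_mem_of_mem_CL u hX (tau_spec u hX)
  exact tau_min u (by omega) hmem

lemma te_first {n : ℕ} {X : Finset (List A)} (hX : X ∈ CL u n) (h1 : 1 ≤ tau u n X)
    {q : ℕ} (hq : q < tau u n X - 1) : word u q (n + 1) ∉ cls (te u n X) := by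
  intro hmem
  rcases mem_cls_iff.mp hmem with heq | heq
  · have ht := congrArg List.tail heq
    rw [word_tail, te, word_tail, Nat.sub_add_cancel h1] at ht
    have : word u (q + 1) n ∈ X := by
      rw [ht]
      exact tau_spec u hX
    have := tau_le u this
    omega
  · have htr := reverse_occ_transfer (u := u) (m := q) (i := tau u n X - 1) (L := n + 1)
      heq (o := 0) (k := n) (by omega)
    have e2 : tau u n X - 1 + (n + 1 - 0 - n) = tau u n X := by omega
    rw [e2] at htr
    have : word u (q + 0) n ∈ X := by
      rw [htr]
      exact reverse_mem_of_mem_CL u hX (tau_spec u hX)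
    have := tau_le u this
    omega

lemma te_mem_NPF {n : ℕ} {X : Finset (List A)} (hX : X ∈ CL u n) (h1 : 1 ≤ tau u n X) :
    te u n X ∈ NPF u (n + 1) := by
  simp only [NPF, Finset.mem_filter]
  exact ⟨word_mem_FF u _ _, te_not_pal u hX h1⟩

lemma te_inj {n : ℕ} {X Y : Finset (List A)} (hX : X ∈ CL u n) (hY : Y ∈ CL u n)
    (hX1 : 1 ≤ tau u n X) (hY1 : 1 ≤ tau u n Y)
    (h : cls (te u n X) = cls (te u n Y)) : X = Y := by
  have hmem : te u n Y ∈ cls (te u n X) := h ▸ mem_cls_self _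
  rcases mem_cls_iff.mp hmem with heq | heq
  · have ht := congrArg List.tail heq
    rw [te, te, word_tail, word_tail, Nat.sub_add_cancel hY1, Nat.sub_add_cancel hX1] at ht
    have h1 : word u (tau u n X) n ∈ X := tau_spec u hX
    have h2 : word u (tau u n Y) n ∈ Y := tau_spec u hY
    rw [ht] at h2
    rw [← cls_eq_of_mem_CL u hX h1, ← cls_eq_of_mem_CL u hY h2]
  · exfalso
    have key : ∀ Z W : Finset (List A), Z ∈ CL u n → W ∈ CL u n → 1 ≤ tau u n Z →
        1 ≤ tau u n W → te u n W = (te u n Z).reverse → tau u n Z ≤ tau u n W - 1 := by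
      intro Z W hZ hW hZ1 hW1 hrev
      have htr := reverse_occ_transfer (u := u) (m := tau u n W - 1) (i := tau u n Z - 1)
        (L := n + 1) hrev (o := 0) (k := n) (by omega)
      have e2 : tau u n Z - 1 + (n + 1 - 0 - n) = tau u n Z := by omega
      rw [e2] at htr
      have hm : word u (tau u n W - 1 + 0) n ∈ Z := by
        rw [htr]
        exact reverse_mem_of_mem_CL u hZ (tau_spec u hZ)
      have := tau_le u hm
      omega
    have k1 := key X Y hX hY hX1 hY1 heq
    have k2 := key Y X hY hX hY1 hX1 (by rw [heq, List.reverse_reverse])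
    omega

end Factors



section Main
variable [Fintype A] [DecidableEq A] (u : ℕ → A)

lemma word_eq_shift {a b n : ℕ} (h : word u a n = word u b n) {d k : ℕ}
    (hdk : d + k ≤ n) : word u (a + d) k = word u (b + d) k := by
  apply word_ext (by simp)
  intro j hjl
  have hj : j < k := by simpa using hjl
  simp only [word, getElem_map, getElem_range]
  have hw := word_eq_imp h (j := d + j) (by omega)
  rw [show a + d + j = a + (d + j) by omega, show b + d + j = b + (d + j) by omega]
  exact hw

theorem surj_of_rich (hrich : Rich u) {n : ℕ} {e : List A} (he : e ∈ NPF u (n + 1)) :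
    ∃ X ∈ (CL u n).erase (cls (word u 0 n)), cls (te u n X) = cls e := by
  classical
  simp only [NPF, Finset.mem_filter, mem_FF] at he
  obtain ⟨⟨hlen, hfac⟩, hnp⟩ := he
  have hSne : {p | word u p (n + 1) ∈ cls e}.Nonempty := by
    obtain ⟨i, hocc⟩ := hfac
    unfold OccursAt at hocc
    rw [hlen] at hocc
    exact ⟨i, by simp only [Set.mem_setOf_eq]; rw [← hocc]; exact mem_cls_self e⟩
  set m := sInf {p | word u p (n + 1) ∈ cls e} with hm
  have hx : word u m (n + 1) ∈ cls e := Nat.sInf_mem hSne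
  have hminm : ∀ q < m, word u q (n + 1) ∉ cls e := fun q hq => Nat.notMem_of_lt_sInf hq
  have hclsx : cls (word u m (n + 1)) = cls e := cls_eq_of_mem hx
  have hxnp : ¬ (word u m (n + 1)).reverse = word u m (n + 1) := by
    rcases mem_cls_iff.mp hx with h | h
    · rw [h]; exact hnp
    · rw [h, List.reverse_reverse]
      intro hc
      exact hnp hc.symm
  -- main claim : the class of `word u (m+1) n` does not occur at any position `≤ m`
  have hclaim : ∀ p ≤ m, word u p n ∉ cls (word u (m + 1) n) := by
    intro p hpm hmem
    set P : ℕ → Prop := fun l => word u l n ∈ cls (word u (m + 1) n) with hP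
    have hPp : P p := hmem
    set i0 := Nat.findGreatest P m with hi0
    have hP0 : P i0 := Nat.findGreatest_spec hpm hPp
    have hi0m : i0 ≤ m := Nat.findGreatest_le m
    have hmax : ∀ l, i0 < l → l ≤ m → ¬ P l := fun l h1 h2 => Nat.findGreatest_is_greatest h1 h2
    set N := (m + 1 - i0) + n with hN
    have hNn : n + 1 ≤ N := by omega
    have hrich' : richL (word u i0 N) := by
      have h := hrich (word u i0 N) (word_isFactor u i0 N)
      unfold richL
      exact h
    have hrne : word u i0 N ≠ [] := by
      intro hc
      have h2 := congrArg List.length hc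
      simp only [word_length, List.length_nil] at h2
      omega
    have hspal : (lps (word u i0 N)).reverse = lps (word u i0 N) := (lps_spec hrne).1
    have hsnil : lps (word u i0 N) ≠ [] := (lps_spec hrne).2
    have hssuf : lps (word u i0 N) <:+ word u i0 N := lps_suffix _
    set s := lps (word u i0 N) with hs
    set sl := s.length with hsl
    have hsl1 : 1 ≤ sl := List.length_pos_iff.mpr hsnil
    have hslN : sl ≤ N := by
      have h := hssuf.length_le
      simpa using h
    have hsword : s = word u (i0 + (N - sl)) sl := (suffix_word hssuf).1
    -- unioccurrence of the longest palindromic suffix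
    have huni : ∀ o, o + sl ≤ N - 1 → word u (i0 + o) sl ≠ s := by
      intro o ho hco
      apply lps_not_mem_of_richL hrich' hrne
      refine ⟨?_, hspal⟩
      have hdl : (word u i0 N).dropLast = word u i0 (N - 1) := by
        rw [show N = (N - 1) + 1 by omega]
        rw [word_dropLast u i0 (N - 1)]
        norm_num
      rw [hdl, ← hs, ← hco]
      exact word_infix_word u (by omega) (by omega)
    have htwo : ∀ o, 0 < o → o < N - n → word u (i0 + o) n ∉ cls (word u (m + 1) n) := by
      intro o h1 h2 hc
      exact hmax (i0 + o) (by omega) (by omega) hc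
    rcases lt_or_ge sl n with hcase | hcase
    · -- sl < n
      rcases mem_cls_iff.mp hP0 with hxe | hxe
      · -- word u i0 n = word u (m+1) n
        apply huni (n - sl) (by omega)
        have hsw : s = word u (m + 1 + (n - sl)) sl := by
          rw [hsword]
          congr 1
          omega
        have hshift := word_eq_shift u hxe (d := n - sl) (k := sl) (by omega)
        rw [hshift, ← hsw]
      · -- word u i0 n = (word u (m+1) n).reverse
        apply huni 0 (by omega)
        have htr := reverse_occ_transfer (u := u) (m := i0) (i := m + 1) (L := n) hxe
          (o := 0) (k := sl) (by omega)
        have hsw : s = word u (m + 1 + (n - 0 - sl)) sl := by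
          rw [hsword]
          congr 1
          omega
        rw [htr, ← hsw, hspal]
    rcases eq_or_lt_of_le hslN with hNsl | hslN'
    · -- sl = N : the whole return word is a palindrome
      have hrpal : (word u i0 N).reverse = word u i0 N := by
        have hsr : s = word u i0 N := hssuf.eq_of_length (by rw [← hsl, hNsl]; simp)
        rw [← hsr]
        exact hspal
      have htr := pal_occ_transfer (u := u) (p := i0) (L := N) hrpal
        (o := 0) (k := n + 1) (by omega)
      have e1 : i0 + (N - 0 - (n + 1)) = m := by omega
      rw [e1] at htr
      have hrev_mem : word u (i0 + 0) (n + 1) ∈ cls e := by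
        rw [htr, ← hclsx]
        exact reverse_mem_cls _
      have hge : m ≤ i0 := by
        by_contra hlt
        exact hminm (i0 + 0) (by omega) hrev_mem
      have hi0eq : i0 = m := le_antisymm hi0m hge
      rw [hi0eq] at htr
      exact hxnp (by rw [show m + 0 = m from rfl] at htr; exact htr.symm)
    · -- n ≤ sl < N
      have hspal' : (word u (i0 + (N - sl)) sl).reverse = word u (i0 + (N - sl)) sl := by
        rw [← hsword]
        exact hspal
      have htr := pal_occ_transfer (u := u) (p := i0 + (N - sl)) (L := sl) hspal'
        (o := 0) (k := n) (by omega)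
      rcases lt_or_eq_of_le (show N - sl ≤ N - n by omega) with hlt | heq2
      · apply htwo (N - sl) (by omega) hlt
        have e1 : i0 + (N - sl) + (sl - 0 - n) = m + 1 := by omega
        rw [e1] at htr
        rw [show i0 + (N - sl) = i0 + (N - sl) + 0 by omega, htr]
        exact reverse_mem_cls _
      · -- sl = n
        have hsln : sl = n := by omega
        have hsw : s = word u (m + 1) n := by
          rw [hsword]
          congr 1 <;> omega
        have hwpal : (word u (m + 1) n).reverse = word u (m + 1) n := by
          rw [← hsw, hspal]
        have hx0 : word u i0 n ∈ cls (word u (m + 1) n) := hP0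
        rw [cls_pal hwpal, Finset.mem_singleton] at hx0
        apply huni 0 (by omega)
        rw [show i0 + 0 = i0 from rfl, hsln, hx0]
        exact hsw.symm
  -- conclusion
  have hwFF : word u (m + 1) n ∈ FF u n := word_mem_FF u (m + 1) n
  have hXCL : cls (word u (m + 1) n) ∈ CL u n := Finset.mem_image_of_mem cls hwFF
  have htauw : tau u n (cls (word u (m + 1) n)) = m + 1 := by
    apply Nat.le_antisymm
    · exact tau_le u (mem_cls_self _)
    · by_contra hlt
      push_neg at hlt
      exact hclaim _ (by omega) (tau_spec u hXCL)
  refine ⟨cls (word u (m + 1) n), ?_, ?_⟩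
  · rw [Finset.mem_erase]
    refine ⟨?_, hXCL⟩
    intro hc
    rw [← tau_eq_zero_iff u hXCL] at hc
    omega
  · have hte : te u n (cls (word u (m + 1) n)) = word u m (n + 1) := by
      rw [te, htauw]
      norm_num
    rw [hte, hclsx]

end Main



section Main2
variable [Fintype A] [DecidableEq A] (u : ℕ → A)

lemma key_equiv (hcur : ClosedUnderReversal u) (n : ℕ) :
    ((palComplexity u (n + 1) : ℤ) + (palComplexity u n : ℤ) =
      (complexity u (n + 1) : ℤ) - (complexity u n : ℤ) + 2)
    ↔ (NPC u (n + 1)).card + 1 = (CL u n).card := by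
  have h1 := count_CL u hcur n
  have h2 := count_NPC u hcur (n + 1)
  have h3 := count_split u (n + 1)
  have h4 := complexity_eq_card u n
  have h5 := complexity_eq_card u (n + 1)
  have h6 := palComplexity_eq_card u n
  have h7 := palComplexity_eq_card u (n + 1)
  rw [h4, h5, h6, h7]
  omega

lemma tau_pos {n : ℕ} {X : Finset (List A)} (hX : X ∈ CL u n)
    (hX0 : X ≠ cls (word u 0 n)) : 1 ≤ tau u n X := by
  rcases Nat.eq_zero_or_pos (tau u n X) with h | h
  · exact absurd ((tau_eq_zero_iff u hX).mp h) hX0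
  · exact h

lemma card_eq_of_rich (hcur : ClosedUnderReversal u) (hrich : Rich u) (n : ℕ) :
    (NPC u (n + 1)).card + 1 = (CL u n).card := by
  have hX0 : cls (word u 0 n) ∈ CL u n := Finset.mem_image_of_mem cls (word_mem_FF u 0 n)
  have hbij : ((CL u n).erase (cls (word u 0 n))).card = (NPC u (n + 1)).card := by
    apply Finset.card_bij (fun X _ => cls (te u n X))
    · intro X hX
      rw [Finset.mem_erase] at hX
      exact Finset.mem_image_of_mem cls (te_mem_NPF u hX.2 (tau_pos u hX.2 hX.1))
    · intro X hX Y hY heq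
      rw [Finset.mem_erase] at hX hY
      exact te_inj u hX.2 hY.2 (tau_pos u hX.2 hX.1) (tau_pos u hY.2 hY.1) heq
    · intro Y hY
      obtain ⟨ep, hep, rfl⟩ := Finset.mem_image.mp hY
      obtain ⟨X, hX, hXe⟩ := surj_of_rich u hrich hep
      exact ⟨X, hX, hXe⟩
  rw [← hbij]
  exact Finset.card_erase_add_one hX0

lemma first_occ_step (hcur : ClosedUnderReversal u) {n : ℕ}
    (heq : (NPC u (n + 1)).card + 1 = (CL u n).card) {m : ℕ}
    (hnp : ¬ (word u m (n + 1)).reverse = word u m (n + 1))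
    (hfirst : ∀ q < m, word u q (n + 1) ∉ cls (word u m (n + 1))) :
    ∀ q < m + 1, word u q n ∉ cls (word u (m + 1) n) := by
  classical
  have hX0 : cls (word u 0 n) ∈ CL u n := Finset.mem_image_of_mem cls (word_mem_FF u 0 n)
  have hsub : Finset.image (fun X => cls (te u n X)) ((CL u n).erase (cls (word u 0 n)))
      ⊆ NPC u (n + 1) := by
    intro Y hY
    obtain ⟨X, hX, rfl⟩ := Finset.mem_image.mp hY
    rw [Finset.mem_erase] at hX
    exact Finset.mem_image_of_mem cls (te_mem_NPF u hX.2 (tau_pos u hX.2 hX.1))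
  have hinj : Set.InjOn (fun X => cls (te u n X)) ↑((CL u n).erase (cls (word u 0 n))) := by
    intro X hX Y hY heq'
    simp only [Finset.coe_erase, Set.mem_diff, Finset.mem_coe, Set.mem_singleton_iff] at hX hY
    exact te_inj u hX.1 hY.1 (tau_pos u hX.1 hX.2) (tau_pos u hY.1 hY.2) heq'
  have hcard : (NPC u (n + 1)).card ≤
      (Finset.image (fun X => cls (te u n X)) ((CL u n).erase (cls (word u 0 n)))).card := by
    rw [Finset.card_image_of_injOn hinj]
    have := Finset.card_erase_add_one hX0
    omega
  have himg : Finset.image (fun X => cls (te u n X)) ((CL u n).erase (cls (word u 0 n)))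
      = NPC u (n + 1) := Finset.eq_of_subset_of_card_le hsub hcard
  have heNPF : word u m (n + 1) ∈ NPF u (n + 1) :=
    Finset.mem_filter.mpr ⟨word_mem_FF u m (n + 1), hnp⟩
  have heNPC : cls (word u m (n + 1)) ∈ NPC u (n + 1) := Finset.mem_image_of_mem cls heNPF
  rw [← himg] at heNPC
  obtain ⟨X, hX, hXe⟩ := Finset.mem_image.mp heNPC
  rw [Finset.mem_erase] at hX
  have h1 : 1 ≤ tau u n X := tau_pos u hX.2 hX.1
  have hteIn : te u n X ∈ cls (word u m (n + 1)) := by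
    rw [← hXe]
    exact mem_cls_self _
  have hge : m ≤ tau u n X - 1 := by
    by_contra hlt
    push_neg at hlt
    exact hfirst (tau u n X - 1) hlt hteIn
  have hle : tau u n X - 1 ≤ m := by
    by_contra hlt
    push_neg at hlt
    exact te_first u hX.2 h1 hlt (by rw [hXe]; exact mem_cls_self _)
  have htau : tau u n X = m + 1 := by omega
  have hXeq : X = cls (word u (m + 1) n) := by
    have hsp := tau_spec u hX.2
    rw [htau] at hsp
    exact (cls_eq_of_mem_CL u hX.2 hsp).symm
  intro q hq
  rw [← hXeq]
  apply tau_min u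
  omega

lemma chain (hcur : ClosedUnderReversal u)
    (hE : ∀ n : ℕ, (NPC u (n + 1)).card + 1 = (CL u n).card) (n : ℕ) :
    ∀ d, 1 ≤ d → ∀ p s, ¬ (word u p (n + d)).reverse = word u p (n + d) →
      (∀ q < p, word u q (n + d) ∉ cls (word u p (n + d))) →
      word u (p + d) n = s → s.reverse = s →
      (∀ o, 0 < o → o < d → word u (p + o) n ≠ s) →
      (∃ q ≤ p, word u q n = s) → False := by
  intro d
  induction d with
  | zero => omega
  | succ d ih =>
    intro _ p s hznp hzfirst hs hspal hmid hsome
    rcases Nat.eq_zero_or_pos d with hd0 | hdpos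
    · subst hd0
      simp only [Nat.zero_add] at hznp hzfirst hs
      have hEs := first_occ_step u hcur (hE n) hznp hzfirst
      obtain ⟨q, hqp, hqs⟩ := hsome
      apply hEs q (by omega)
      rw [hs, ← hqs]
      exact mem_cls_self _
    · have hEs := first_occ_step u hcur (hE (n + d)) (m := p) hznp hzfirst
      have hz'np : ¬ (word u (p + 1) (n + d)).reverse = word u (p + 1) (n + d) := by
        intro hpal
        have htr := pal_occ_transfer (u := u) (p := p + 1) (L := n + d) hpal
          (o := 0) (k := n) (by omega)
        have e1 : p + 1 + (n + d - 0 - n) = p + (d + 1) := by omega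
        rw [e1, hs] at htr
        rw [hspal] at htr
        exact hmid 1 (by omega) (by omega) htr
      apply ih (by omega) (p + 1) s hz'np hEs ?_ hspal ?_ ?_
      · -- word u (p + 1 + d) n = s
        rw [show p + 1 + d = p + (d + 1) by omega]
        exact hs
      · intro o h1 h2
        rw [show p + 1 + o = p + (o + 1) by omega]
        exact hmid (o + 1) (by omega) (by omega)
      · obtain ⟨q, hqp, hqs⟩ := hsome
        exact ⟨q, by omega, hqs⟩

lemma bad_of_not_rich (hnr : ¬ Rich u) :
    ∃ i k nn s, (s : List A).reverse = s ∧ s.length = nn ∧ i < k ∧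
      word u i nn = s ∧ word u k nn = s ∧
      (∀ l, i < l → l < k → word u l nn ≠ s) ∧
      ¬ (word u i (k - i + nn)).reverse = word u i (k - i + nn) := by
  classical
  unfold Rich at hnr
  push_neg at hnr
  obtain ⟨w, hfac, hpc⟩ := hnr
  obtain ⟨p, hocc⟩ := hfac
  unfold OccursAt at hocc
  have hSne : ∃ k, k ∈ {k | ¬ richL (word u p k)} := by
    refine ⟨w.length, ?_⟩
    simp only [Set.mem_setOf_eq]
    unfold richL
    rw [← hocc]
    exact hpc
  set M := sInf {k | ¬ richL (word u p k)} with hM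
  have hMmem : ¬ richL (word u p M) := Nat.sInf_mem hSne
  have hM1 : 1 ≤ M := by
    rcases Nat.eq_zero_or_pos M with h0 | h
    · exfalso
      apply hMmem
      rw [h0]
      unfold richL
      have hnil : word u p 0 = [] := by simp [word]
      rw [hnil, palCount_nil]
      simp
    · exact h
  have hMprev : richL (word u p (M - 1)) := by
    by_contra hc
    have := Nat.sInf_le (show M - 1 ∈ {k | ¬ richL (word u p k)} from hc)
    omega
  have hxne : word u p M ≠ [] := by
    intro hc
    have h2 := congrArg List.length hc
    simp only [word_length, List.length_nil] at h2
    omega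
  have hdx : (word u p M).dropLast = word u p (M - 1) := by
    conv_lhs => rw [show M = (M - 1) + 1 by omega]
    rw [word_dropLast]
  have hmem : lps (word u p M) ∈ PalSet ((word u p M).dropLast) := by
    apply lps_mem_of_not_richL hxne ?_ hMmem
    rw [hdx]
    exact hMprev
  have hspal : (lps (word u p M)).reverse = lps (word u p M) := (lps_spec hxne).1
  have hsnil : lps (word u p M) ≠ [] := (lps_spec hxne).2
  have hssuf : lps (word u p M) <:+ word u p M := lps_suffix _
  set s := lps (word u p M) with hsdef
  have hsword : s = word u (p + (M - s.length)) s.length := (suffix_word hssuf).1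
  have hsl : s.length ≤ M := by simpa using hssuf.length_le
  have hsl1 : 1 ≤ s.length := List.length_pos_iff.mpr hsnil
  obtain ⟨hinf, _⟩ := hmem
  rw [hdx] at hinf
  obtain ⟨o, ho, hoeq⟩ := infix_word hinf
  set P : ℕ → Prop := fun l => word u l s.length = s with hP
  have hPo : P (p + o) := hoeq.symm
  have hpo_le : p + o ≤ (p + (M - s.length)) - 1 := by omega
  set i := Nat.findGreatest P ((p + (M - s.length)) - 1) with hi
  have hPi : P i := Nat.findGreatest_spec hpo_le hPo
  have hik : i ≤ (p + (M - s.length)) - 1 := Nat.findGreatest_le _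
  have hpi : p + o ≤ i := Nat.le_findGreatest hpo_le hPo
  have hmax : ∀ l, i < l → l ≤ (p + (M - s.length)) - 1 → ¬ P l :=
    fun l h1 h2 => Nat.findGreatest_is_greatest h1 h2
  refine ⟨i, p + (M - s.length), s.length, s, hspal, rfl, by omega, hPi, hsword.symm, ?_, ?_⟩
  · intro l h1 h2
    exact hmax l h1 (by omega)
  · intro hpal
    have hrsuf : word u i (p + (M - s.length) - i + s.length) <:+ word u p M :=
      word_suffix_word u (by omega) (by omega)
    have hrne : word u i (p + (M - s.length) - i + s.length) ≠ [] := by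
      intro hc
      have h2 := congrArg List.length hc
      simp only [word_length, List.length_nil] at h2
      omega
    have hlen := lps_max hxne hrsuf hpal hrne
    rw [← hsdef] at hlen
    simp only [word_length] at hlen
    omega

lemma rich_of_eq (hcur : ClosedUnderReversal u)
    (hE : ∀ n : ℕ, (NPC u (n + 1)).card + 1 = (CL u n).card) : Rich u := by
  by_contra hnr
  obtain ⟨i, k, nn, s, hspal, hslen, hik, his, hks, hmid, hrnp⟩ := bad_of_not_rich u hnr
  set L := k - i + nn with hL
  have hSne : ∃ q, q ∈ {q | word u q L ∈ cls (word u i L)} := by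
    refine ⟨i, ?_⟩
    simp only [Set.mem_setOf_eq]
    exact mem_cls_self _
  set mm := sInf {q | word u q L ∈ cls (word u i L)} with hmm
  have hxm : word u mm L ∈ cls (word u i L) := Nat.sInf_mem hSne
  have hmmin : ∀ q < mm, word u q L ∉ cls (word u i L) := fun q hq => Nat.notMem_of_lt_sInf hq
  have hmle : mm ≤ i := Nat.sInf_le (by simp only [Set.mem_setOf_eq]; exact mem_cls_self _)
  have hclseq : cls (word u mm L) = cls (word u i L) := cls_eq_of_mem hxm
  have hxnp : ¬ (word u mm L).reverse = word u mm L := by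
    rcases mem_cls_iff.mp hxm with h | h
    · rw [h]
      exact hrnp
    · rw [h, List.reverse_reverse]
      exact fun hc => hrnp hc.symm
  have hfirst : ∀ q < mm, word u q L ∉ cls (word u mm L) := by
    intro q hq
    rw [hclseq]
    exact hmmin q hq
  have hd1 : 1 ≤ k - i := by omega
  have hLe : L = nn + (k - i) := by omega
  rw [hLe] at hxnp hfirst hxm
  rcases mem_cls_iff.mp hxm with hcase | hcase
  · -- word u mm L = word u i L
    apply chain u hcur hE nn (k - i) hd1 mm s hxnp hfirst ?_ hspal ?_ ?_
    · have h := word_eq_shift u hcase (d := k - i) (k := nn) (by omega)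
      rw [show i + (k - i) = k by omega] at h
      rw [h, hks]
    · intro o h1 h2
      have h := word_eq_shift u hcase (d := o) (k := nn) (by omega)
      rw [h]
      exact hmid (i + o) (by omega) (by omega)
    · refine ⟨mm, le_rfl, ?_⟩
      have h := word_eq_shift u hcase (d := 0) (k := nn) (by omega)
      rw [show mm + 0 = mm by omega, show i + 0 = i by omega] at h
      rw [h, his]
  · -- word u mm L = (word u i L).reverse
    apply chain u hcur hE nn (k - i) hd1 mm s hxnp hfirst ?_ hspal ?_ ?_
    · have h := reverse_occ_transfer (u := u) hcase (o := k - i) (k := nn) (by omega)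
      rw [show i + (nn + (k - i) - (k - i) - nn) = i by omega] at h
      rw [h, his, hspal]
    · intro o h1 h2 hc
      have h := reverse_occ_transfer (u := u) hcase (o := o) (k := nn) (by omega)
      rw [h] at hc
      have : word u (i + (nn + (k - i) - o - nn)) nn = s.reverse := by
        rw [← hc, List.reverse_reverse]
      rw [hspal] at this
      exact hmid (i + (nn + (k - i) - o - nn)) (by omega) (by omega) this
    · refine ⟨mm, le_rfl, ?_⟩
      have h := reverse_occ_transfer (u := u) hcase (o := 0) (k := nn) (by omega)
      rw [show mm + 0 = mm by omega, show i + (nn + (k - i) - 0 - nn) = k by omega] at h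
      rw [h, hks, hspal]

end Main2

end Stmt5Aux

/-- If the language of `u` is closed under reversal, then `u` is
rich iff `P(n+1) + P(n) = C(n+1) − C(n) + 2` for all `n`. -/
theorem stmt5 {A : Type*} [Fintype A] (u : ℕ → A)
    (hall : AllLettersOccur u)
    (hcur : ClosedUnderReversal u) :
    Rich u ↔ ∀ n : ℕ, (palComplexity u (n + 1) : ℤ) + (palComplexity u n : ℤ) =
      (complexity u (n + 1) : ℤ) - (complexity u n : ℤ) + 2 := by
  letI : DecidableEq A := Classical.decEq A
  constructor
  · intro hrich n
    rw [Stmt5Aux.key_equiv u hcur n]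
    exact Stmt5Aux.card_eq_of_rich u hcur hrich n
  · intro h
    apply Stmt5Aux.rich_of_eq u hcur
    intro n
    rw [← Stmt5Aux.key_equiv u hcur n]
    exact h n
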